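/- arXiv:2110.15504 — 2 statements merged into one kernel-verified Lean document; each statement's English description precedes it below -/
import Mathlib

section
/- For any probability measure μ on the unit sphere S of an n-dimensional real inner product space, if x and y are independent random vectors each distributed according to μ, then E[⟨x,y⟩²] ≥ 1/n. -/
open MeasureTheory
open scoped InnerProductSpace

section Aux

variable {n : ℕ} (μ : Measure (EuclideanSpace ℝ (Fin n))) [IsProbabilityMeasure μ]

lemma coord_abs_le_norm (x : EuclideanSpace ℝ (Fin n)) (i : Fin n) : |x i| ≤ ‖x‖ := by
  rw [EuclideanSpace.norm_eq]
  have h1 : |x i| = Real.sqrt (‖x i‖ ^ 2) := by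
    rw [Real.sqrt_sq_eq_abs]; simp
  rw [h1]
  apply Real.sqrt_le_sqrt
  exact Finset.single_le_sum (f := fun j => ‖x j‖ ^ 2) (fun j _ => by positivity)
    (Finset.mem_univ i)

lemma integrable_coord_mul (hsphere : ∀ᵐ x ∂μ, ‖x‖ = 1) (i j : Fin n) :
    Integrable (fun x : EuclideanSpace ℝ (Fin n) => x i * x j) μ := by
  apply Integrable.mono' (integrable_const (1 : ℝ))
  · exact (((EuclideanSpace.proj i : EuclideanSpace ℝ (Fin n) →L[ℝ] ℝ).continuous.mul
      (EuclideanSpace.proj j : EuclideanSpace ℝ (Fin n) →L[ℝ] ℝ).continuous)).aestronglyMeasurable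
  · filter_upwards [hsphere] with x hx
    have hi := coord_abs_le_norm x i
    have hj := coord_abs_le_norm x j
    rw [hx] at hi hj
    calc ‖x i * x j‖ = |x i| * |x j| := abs_mul _ _
      _ ≤ 1 * 1 := mul_le_mul hi hj (abs_nonneg _) zero_le_one
      _ = 1 := one_mul 1

end Aux

theorem expectation_sq_inner_ge_one_div_dim
    {n : ℕ} (hn : 0 < n) (μ : Measure (EuclideanSpace ℝ (Fin n)))
    [IsProbabilityMeasure μ] (hsphere : ∀ᵐ x ∂μ, ‖x‖ = 1) :
    (1 : ℝ) / n ≤ ∫ x, (∫ y, ⟪x, y⟫_ℝ ^ 2 ∂μ) ∂μ := by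
  set m : Fin n → Fin n → ℝ := fun i j => ∫ x, x i * x j ∂μ with hm
  -- inner integral
  have hinner : ∀ x : EuclideanSpace ℝ (Fin n),
      (∫ y, ⟪x, y⟫_ℝ ^ 2 ∂μ) = ∑ i, ∑ j, x i * x j * m i j := by
    intro x
    have hexp : ∀ y : EuclideanSpace ℝ (Fin n),
        ⟪x, y⟫_ℝ ^ 2 = ∑ i, ∑ j, x i * x j * (y i * y j) := by
      intro y
      rw [PiLp.inner_apply, sq, Finset.sum_mul_sum]
      congr 1; ext i; congr 1; ext j
      simp [RCLike.inner_apply]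
      ring
    simp_rw [hexp]
    rw [integral_finset_sum]
    · congr 1; ext i
      rw [integral_finset_sum]
      · congr 1; ext j
        rw [integral_const_mul]
      · intro j _
        exact (integrable_coord_mul μ hsphere i j).const_mul _
    · intro i _
      apply integrable_finset_sum
      intro j _
      exact (integrable_coord_mul μ hsphere i j).const_mul _
  simp_rw [hinner]
  -- outer integral
  have houter : (∫ x, ∑ i, ∑ j, x i * x j * m i j ∂μ) = ∑ i, ∑ j, (m i j) ^ 2 := by
    rw [integral_finset_sum]
    · congr 1; ext i
      rw [integral_finset_sum]
      · congr 1; ext j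
        rw [integral_mul_const, sq]
      · intro j _
        exact (integrable_coord_mul μ hsphere i j).mul_const _
    · intro i _
      apply integrable_finset_sum
      intro j _
      exact (integrable_coord_mul μ hsphere i j).mul_const _
  rw [houter]
  -- trace = 1
  have htrace : ∑ i, m i i = 1 := by
    have : ∑ i, m i i = ∫ x, ∑ i, x i * x i ∂μ := by
      rw [integral_finset_sum]
      intro i _
      exact integrable_coord_mul μ hsphere i i
    rw [this]
    have : ∫ x, (∑ i, x i * x i) ∂μ = ∫ _x, (1 : ℝ) ∂μ := by
      apply integral_congr_ae
      filter_upwards [hsphere] with x hx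
      have : ∑ i, x i * x i = ‖x‖ ^ 2 := by
        rw [EuclideanSpace.norm_eq, Real.sq_sqrt]
        · congr 1; ext i; simp [sq]
        · positivity
      rw [this, hx]; norm_num
    rw [this]; simp
  -- Cauchy-Schwarz
  have hcs : (1 : ℝ) ≤ n * ∑ i, ∑ j, (m i j) ^ 2 := by
    have h1 : (∑ i, m i i) ^ 2 ≤ (n : ℝ) * ∑ i, (m i i) ^ 2 := by
      have := sq_sum_le_card_mul_sum_sq (s := (Finset.univ : Finset (Fin n)))
        (f := fun i => m i i)
      push_cast at this
      simpa using this
    have h2 : ∑ i, (m i i) ^ 2 ≤ ∑ i, ∑ j, (m i j) ^ 2 := by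
      apply Finset.sum_le_sum
      intro i _
      exact Finset.single_le_sum (f := fun j => (m i j) ^ 2) (fun j _ => by positivity)
        (Finset.mem_univ i)
    calc (1 : ℝ) = (∑ i, m i i) ^ 2 := by rw [htrace]; norm_num
      _ ≤ (n : ℝ) * ∑ i, (m i i) ^ 2 := h1
      _ ≤ (n : ℝ) * ∑ i, ∑ j, (m i j) ^ 2 := by
          apply mul_le_mul_of_nonneg_left h2 (by positivity)
  rw [div_le_iff₀ (by exact_mod_cast hn : (0:ℝ) < n)] at *
  linarith [hcs]
end

section
/- Let n ≥ 2 and let x ∈ ℝⁿ be a nonzero vector whose coordinates sum to zero. Then ∑_{σ ∈ Sₙ} ⟨x, σx⟩² = n!·‖x‖⁴/(n−1), equivalently ∑_{σ∈Sₙ} cos²(x, σx) = n!/(n−1). -/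
open scoped InnerProductSpace
open Finset

private lemma aux_offDiag {n : ℕ} (f : Fin n → ℝ) :
    ∑ p ∈ (Finset.univ : Finset (Fin n)).offDiag, f p.1 * f p.2
      = (∑ i, f i) ^ 2 - ∑ i, f i ^ 2 := by
  have h : (∑ i, f i) ^ 2 = ∑ p ∈ (Finset.univ ×ˢ Finset.univ : Finset (Fin n × Fin n)), f p.1 * f p.2 := by
    rw [sq, Finset.sum_mul_sum, Finset.sum_product]
  rw [h, ← Finset.diag_union_offDiag, Finset.sum_union (Finset.disjoint_diag_offDiag _),
    Finset.sum_diag]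
  simp [sq]

theorem sum_over_permutations_sq_inner
    {n : ℕ} (hn : 2 ≤ n) (x : EuclideanSpace ℝ (Fin n)) (hx : x ≠ 0)
    (hsum : ∑ i, x i = 0) :
    ∑ σ : Equiv.Perm (Fin n), ⟪x, (WithLp.toLp 2 (fun i => x (σ i)) : EuclideanSpace ℝ (Fin n))⟫_ℝ ^ 2
      = (Nat.factorial n : ℝ) * ‖x‖ ^ 4 / ((n : ℝ) - 1) := by
  classical
  set t : ℝ := ∑ i, x i ^ 2 with ht
  have htnn : 0 ≤ t := Finset.sum_nonneg fun i _ => sq_nonneg _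
  set K : Fin n → Fin n → ℝ := fun i j => ∑ σ : Equiv.Perm (Fin n), x (σ i) * x (σ j) with hKdef
  have key : ∀ (τ : Equiv.Perm (Fin n)) (i j : Fin n), K (τ i) (τ j) = K i j := by
    intro τ i j
    have := Equiv.sum_comp (Equiv.mulRight τ) (fun σ : Equiv.Perm (Fin n) => x (σ i) * x (σ j))
    simpa [Equiv.Perm.mul_apply] using this
  have hK_diag : ∀ i i' : Fin n, K i i = K i' i' := by
    intro i i'
    have := key (Equiv.swap i' i) i' i'
    simpa [Equiv.swap_apply_left] using this
  have hK_off : ∀ i j i' j' : Fin n, i ≠ j → i' ≠ j' → K i j = K i' j' := by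
    intro i j i' j' hij hij'
    set s := Equiv.swap i' i with hs
    have hs1 : s i' = i := Equiv.swap_apply_left _ _
    set τ := s.trans (Equiv.swap (s j') j) with hτ
    have hτi : τ i' = i := by
      simp only [hτ, Equiv.trans_apply, hs1]
      apply Equiv.swap_apply_of_ne_of_ne
      · intro h
        apply hij'
        have := congrArg s h
        simpa [hs, Equiv.swap_apply_right] using this
      · exact hij
    have hτj : τ j' = j := by
      simp [hτ, Equiv.trans_apply, Equiv.swap_apply_left]
    calc K i j = K (τ i') (τ j') := by rw [hτi, hτj]
      _ = K i' j' := key τ i' j'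
  -- values
  have hσt : ∀ σ : Equiv.Perm (Fin n), ∑ i, x (σ i) * x (σ i) = t := by
    intro σ
    rw [ht]
    rw [← Equiv.sum_comp σ (fun i => x i ^ 2)]
    simp [sq]
  have hσ0 : ∀ σ : Equiv.Perm (Fin n), ∑ i, x (σ i) = 0 := by
    intro σ
    rw [← hsum]
    exact Equiv.sum_comp σ x
  set i0 : Fin n := ⟨0, by omega⟩ with hi0
  set j0 : Fin n := ⟨1, by omega⟩ with hj0
  have hij0 : i0 ≠ j0 := by
    simp [hi0, hj0, Fin.ext_iff]
  set d : ℝ := K i0 i0 with hd0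
  set c : ℝ := K i0 j0 with hc0
  have hd : (n : ℝ) * d = (Nat.factorial n : ℝ) * t := by
    have h1 : ∑ i : Fin n, K i i = (Nat.factorial n : ℝ) * t := by
      rw [Finset.sum_comm]
      rw [Finset.sum_congr rfl fun σ _ => hσt σ]
      simp [Finset.card_univ, Fintype.card_perm, mul_comm]
    have h2 : ∑ i : Fin n, K i i = (n : ℝ) * d := by
      rw [Finset.sum_congr rfl fun i _ => hK_diag i i0]
      simp [Finset.card_univ, mul_comm]
      exact Or.inl rfl
    rw [← h2, h1]
  have hc : (n : ℝ) * ((n : ℝ) - 1) * c = -((Nat.factorial n : ℝ) * t) := by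
    have h1 : ∑ p ∈ (Finset.univ : Finset (Fin n)).offDiag, K p.1 p.2
        = -((Nat.factorial n : ℝ) * t) := by
      rw [hKdef]
      rw [Finset.sum_comm]
      have : ∀ σ : Equiv.Perm (Fin n),
          ∑ p ∈ (Finset.univ : Finset (Fin n)).offDiag, x (σ p.1) * x (σ p.2) = -t := by
        intro σ
        rw [aux_offDiag (fun i => x (σ i))]
        rw [hσ0 σ]
        have := hσt σ
        simp only [sq] at *
        rw [this]
        ring
      rw [Finset.sum_congr rfl fun σ _ => this σ]
      simp [Finset.card_univ, Fintype.card_perm, mul_comm]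
    have h2 : ∑ p ∈ (Finset.univ : Finset (Fin n)).offDiag, K p.1 p.2
        = (n : ℝ) * ((n : ℝ) - 1) * c := by
      rw [Finset.sum_congr rfl fun p hp => hK_off p.1 p.2 i0 j0 (Finset.mem_offDiag.1 hp).2.2 hij0]
      rw [Finset.sum_const, Finset.offDiag_card]
      have hle : n ≤ n * n := Nat.le_mul_of_pos_left n (by omega)
      simp only [Finset.card_univ, Fintype.card_fin, nsmul_eq_mul]
      rw [Nat.cast_sub hle]
      push_cast
      ring
    rw [← h2, h1]
  -- main expansion
  have hinner : ∀ σ : Equiv.Perm (Fin n),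
      ⟪x, (WithLp.toLp 2 (fun i => x (σ i)) : EuclideanSpace ℝ (Fin n))⟫_ℝ = ∑ i, x i * x (σ i) := by
    intro σ
    simp [PiLp.inner_apply, RCLike.inner_apply, conj_trivial]
    exact Finset.sum_congr rfl fun i _ => mul_comm _ _
  have expand : ∑ σ : Equiv.Perm (Fin n),
      ⟪x, (WithLp.toLp 2 (fun i => x (σ i)) : EuclideanSpace ℝ (Fin n))⟫_ℝ ^ 2
      = t * d + (-t) * c := by
    calc ∑ σ : Equiv.Perm (Fin n),
        ⟪x, (WithLp.toLp 2 (fun i => x (σ i)) : EuclideanSpace ℝ (Fin n))⟫_ℝ ^ 2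
        = ∑ σ : Equiv.Perm (Fin n), ∑ i, ∑ j, x i * x j * (x (σ i) * x (σ j)) := by
          refine Finset.sum_congr rfl fun σ _ => ?_
          rw [hinner σ, sq, Finset.sum_mul_sum]
          exact Finset.sum_congr rfl fun i _ => Finset.sum_congr rfl fun j _ => by ring
      _ = ∑ i, ∑ j, ∑ σ : Equiv.Perm (Fin n), x i * x j * (x (σ i) * x (σ j)) := by
          rw [Finset.sum_comm]
          exact Finset.sum_congr rfl fun i _ => Finset.sum_comm
      _ = ∑ i, ∑ j, x i * x j * K i j := by
          refine Finset.sum_congr rfl fun i _ => Finset.sum_congr rfl fun j _ => ?_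
          rw [hKdef, Finset.mul_sum]
      _ = ∑ p ∈ (Finset.univ ×ˢ Finset.univ : Finset (Fin n × Fin n)),
            x p.1 * x p.2 * K p.1 p.2 := by rw [Finset.sum_product]
      _ = ∑ p ∈ (Finset.univ : Finset (Fin n)).diag, x p.1 * x p.2 * K p.1 p.2
          + ∑ p ∈ (Finset.univ : Finset (Fin n)).offDiag, x p.1 * x p.2 * K p.1 p.2 := by
          rw [← Finset.diag_union_offDiag, Finset.sum_union (Finset.disjoint_diag_offDiag _)]
      _ = t * d + (-t) * c := by
          congr 1
          · rw [Finset.sum_diag]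
            rw [Finset.sum_congr rfl fun i _ => by rw [hK_diag i i0]]
            rw [← Finset.sum_mul, ht]
            congr 1
            exact Finset.sum_congr rfl fun i _ => (pow_two (x i)).symm
          · rw [Finset.sum_congr rfl fun p hp => by
              rw [hK_off p.1 p.2 i0 j0 (Finset.mem_offDiag.1 hp).2.2 hij0]]
            rw [← Finset.sum_mul]
            rw [aux_offDiag x, hsum]
            rw [← ht]
            ring
  rw [expand]
  have hnorm : ‖x‖ ^ 2 = t := by
    have h2 : ∑ i, ‖x i‖ ^ 2 = t := by
      rw [ht]; simp [Real.norm_eq_abs, sq_abs]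
    rw [EuclideanSpace.norm_eq, Real.sq_sqrt (by positivity), h2]
  have hnorm4 : ‖x‖ ^ 4 = t ^ 2 := by
    rw [show (4 : ℕ) = 2 * 2 from rfl, pow_mul, hnorm]
  rw [hnorm4]
  have hn0 : (n : ℝ) ≠ 0 := by positivity
  have hn1 : (n : ℝ) - 1 ≠ 0 := by
    have : (2 : ℝ) ≤ n := by exact_mod_cast hn
    linarith
  rw [eq_div_iff hn1]
  apply mul_left_cancel₀ hn0
  linear_combination (t * ((n : ℝ) - 1)) * hd - t * hc
end
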